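/- For all j, k, l ∈ 𝒵_L with j₃ ≠ 0 and k₃ ≠ 0, and all r, s ∈ {−1,+1}: |B_{jkl}^{rs0}| ≤ √5 |M| (|k'| + |j'| |k₃| / |j₃|). -/

import Mathlib

noncomputable section
open scoped Classical

abbrev V3 := Fin 3 → ℝ

/-- Euclidean norm of a vector in ℝ³. -/
def enorm3 (k : V3) : ℝ := Real.sqrt (k 0 ^ 2 + k 1 ^ 2 + k 2 ^ 2)

/-- Horizontal part k' = (k₁, k₂, 0). -/
def horiz (k : V3) : V3 := ![k 0, k 1, 0]

/-- The lattice 𝒵_L of wavevectors. -/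
def ZL (L₁ L₂ L₃ : ℝ) : Set V3 :=
  {k | ∃ n : Fin 3 → ℤ,
    k = ![2 * Real.pi * (n 0 : ℝ) / L₁, 2 * Real.pi * (n 1 : ℝ) / L₂,
          2 * Real.pi * (n 2 : ℝ) / L₃]}

/-- Inertia–gravity frequency ω_k^s = s|k|/k₃. -/
def omg (k : V3) (s : ℝ) : ℝ := s * enorm3 k / k 2

/-- Slow eigenvector X_k^0. -/
def X0 (k : V3) : Fin 3 → ℂ :=
  if horiz k = 0 then ![0, 0, ((Real.sign (k 2) : ℝ) : ℂ)]
  else ![((k 1 / enorm3 k : ℝ) : ℂ), ((-(k 0) / enorm3 k : ℝ) : ℂ), ((k 2 / enorm3 k : ℝ) : ℂ)]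

/-- Fast eigenvectors X_k^s, s = ±1. -/
def Xs (k : V3) (s : ℝ) : Fin 3 → ℂ :=
  if horiz k = 0 then
    ![(((Real.sqrt 2)⁻¹ : ℝ) : ℂ), -Complex.I * s * (((Real.sqrt 2)⁻¹ : ℝ) : ℂ), 0]
  else
    ![(((-(k 1) * k 2 : ℝ) : ℂ) + Complex.I * s * k 0 * enorm3 k) /
        ((Real.sqrt 2 * enorm3 (horiz k) * enorm3 k : ℝ) : ℂ),
      (((k 0 * k 2 : ℝ) : ℂ) + Complex.I * s * k 1 * enorm3 k) /
        ((Real.sqrt 2 * enorm3 (horiz k) * enorm3 k : ℝ) : ℂ),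
      ((enorm3 (horiz k) ^ 2 : ℝ) : ℂ) /
        ((Real.sqrt 2 * enorm3 (horiz k) * enorm3 k : ℝ) : ℂ)]

/-- The incompressible-velocity vector V X_j^r. -/
def VX (j : V3) (r : ℝ) : Fin 3 → ℂ :=
  if horiz j = 0 then Xs j r
  else
    ![(((-(j 1) * j 2 : ℝ) : ℂ) + Complex.I * r * j 0 * enorm3 j) /
        ((Real.sqrt 2 * enorm3 j * enorm3 (horiz j) : ℝ) : ℂ),
      (((j 0 * j 2 : ℝ) : ℂ) + Complex.I * r * j 1 * enorm3 j) /
        ((Real.sqrt 2 * enorm3 j * enorm3 (horiz j) : ℝ) : ℂ),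
      (-Complex.I * r * ((enorm3 (horiz j) ^ 2 * enorm3 j / j 2 : ℝ) : ℂ)) /
        ((Real.sqrt 2 * enorm3 j * enorm3 (horiz j) : ℝ) : ℂ)]

/-- Bilinear pairing a·b on ℂ³. -/
def dotC (a b : Fin 3 → ℂ) : ℂ := a 0 * b 0 + a 1 * b 1 + a 2 * b 2

/-- Pairing of a complex vector with a real vector. -/
def dotR (a : Fin 3 → ℂ) (k : V3) : ℂ :=
  a 0 * (k 0 : ℂ) + a 1 * (k 1 : ℂ) + a 2 * (k 2 : ℂ)

/-- The interaction coefficient B_{jkl}^{rs0}. -/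
def Brs0 (M : ℝ) (j k l : V3) (r s : ℝ) : ℂ :=
  if j + k = l ∧ j 2 * k 2 ≠ 0 ∧ l ≠ 0 then
    Complex.I * M * dotR (VX j r) k * dotC (Xs k s) (X0 l)
  else 0

lemma enorm_nonneg' (k : V3) : 0 ≤ enorm3 k := Real.sqrt_nonneg _
lemma sq_enorm (k : V3) : enorm3 k ^ 2 = k 0 ^ 2 + k 1 ^ 2 + k 2 ^ 2 :=
  Real.sq_sqrt (by positivity)
lemma enorm_horiz (k : V3) : enorm3 (horiz k) = Real.sqrt (k 0 ^ 2 + k 1 ^ 2) := by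
  simp [enorm3, horiz]
lemma sq_enorm_horiz (k : V3) : enorm3 (horiz k) ^ 2 = k 0 ^ 2 + k 1 ^ 2 := by
  rw [enorm_horiz]; exact Real.sq_sqrt (by positivity)
lemma horiz_eq_zero_iff (k : V3) : horiz k = 0 ↔ k 0 = 0 ∧ k 1 = 0 := by
  constructor
  · intro h
    exact ⟨by simpa [horiz] using congrFun h 0, by simpa [horiz] using congrFun h 1⟩
  · rintro ⟨h0, h1⟩; funext i; fin_cases i <;> simp [horiz, h0, h1]
lemma enorm_horiz_pos {k : V3} (h : horiz k ≠ 0) : 0 < enorm3 (horiz k) := by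
  rw [enorm_horiz]
  have : k 0 ≠ 0 ∨ k 1 ≠ 0 := by
    by_contra hc; push_neg at hc; exact h ((horiz_eq_zero_iff k).mpr hc)
  rcases this with h' | h' <;> positivity
lemma enorm_pos_of_horiz {k : V3} (h : horiz k ≠ 0) : 0 < enorm3 k := by
  have := enorm_horiz_pos h
  rw [enorm_horiz] at this
  unfold enorm3
  have : 0 < k 0 ^ 2 + k 1 ^ 2 := by
    nlinarith [Real.sq_sqrt (show (0:ℝ) ≤ k 0 ^2 + k 1^2 by positivity)]
  have h2 := sq_nonneg (k 2)
  positivity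
lemma enorm_horiz_le (k : V3) : enorm3 (horiz k) ≤ enorm3 k := by
  rw [enorm_horiz]; exact Real.sqrt_le_sqrt (by nlinarith [sq_nonneg (k 2)])

lemma cabs_mix_div_le (x y d c : ℝ) (hd : d ≠ 0) (hc : 0 ≤ c)
    (h : x ^ 2 + y ^ 2 ≤ c ^ 2 * d ^ 2) :
    ‖(↑x + Complex.I * ↑y) / ↑d‖ ≤ c := by
  rw [norm_div, Complex.norm_real, Real.norm_eq_abs, div_le_iff₀ (abs_pos.mpr hd)]
  have h1 : (‖↑x + Complex.I * ↑y‖) ^ 2 = x ^ 2 + y ^ 2 := by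
    rw [Complex.sq_norm]; simp [Complex.normSq_apply]; ring
  have h2 : (c * |d|) ^ 2 = c ^ 2 * d ^ 2 := by rw [mul_pow, sq_abs]
  have hA := norm_nonneg (↑x + Complex.I * ↑y : ℂ)
  have hB : 0 ≤ c * |d| := mul_nonneg hc (abs_nonneg d)
  calc ‖↑x + Complex.I * ↑y‖
      = Real.sqrt ((‖↑x + Complex.I * ↑y‖) ^ 2) := (Real.sqrt_sq hA).symm
    _ ≤ Real.sqrt ((c * |d|) ^ 2) := Real.sqrt_le_sqrt (by rw [h1, h2]; exact h)
    _ = c * |d| := Real.sqrt_sq hB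

lemma X0_abs_sum_le (l : V3) :
    ‖X0 l 0‖ + ‖X0 l 1‖ + ‖X0 l 2‖ ≤ Real.sqrt 3 := by
  have h13 : (1:ℝ) ≤ Real.sqrt 3 := by
    nlinarith [Real.sq_sqrt (show (0:ℝ) ≤ 3 by norm_num), Real.sqrt_nonneg 3]
  by_cases hl : horiz l = 0
  · rw [X0, if_pos hl]
    simp only [Matrix.cons_val_zero, Matrix.cons_val_one, Matrix.head_cons,
      Matrix.cons_val_two, Matrix.tail_cons, norm_zero, Complex.norm_real, Real.norm_eq_abs,
      zero_add]
    have : |Real.sign (l 2)| ≤ 1 := by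
      rcases lt_trichotomy (l 2) 0 with h | h | h
      · rw [Real.sign_of_neg h]; norm_num
      · rw [h, Real.sign_zero]; norm_num
      · rw [Real.sign_of_pos h]; norm_num
    linarith
  · rw [X0, if_neg hl]
    have hnl := enorm_pos_of_horiz hl
    simp only [Matrix.cons_val_zero, Matrix.cons_val_one, Matrix.head_cons,
      Matrix.cons_val_two, Matrix.tail_cons, Complex.norm_real, Real.norm_eq_abs, abs_div,
      abs_of_pos hnl]
    rw [← add_div, ← add_div, div_le_iff₀ hnl]
    have key : |l 1| + |-l 0| + |l 2| ≤ Real.sqrt 3 * Real.sqrt (l 0 ^2 + l 1 ^2 + l 2 ^2) := by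
      rw [← Real.sqrt_mul (by norm_num : (0:ℝ) ≤ 3)]
      rw [show |-l 0| = |l 0| from abs_neg _]
      refine Real.le_sqrt (by positivity) (by positivity) |>.mpr ?_
      nlinarith [sq_nonneg (|l 0| - |l 1|), sq_nonneg (|l 0| - |l 2|),
        sq_nonneg (|l 1| - |l 2|), sq_abs (l 0), sq_abs (l 1), sq_abs (l 2)]
    calc |l 1| + |-l 0| + |l 2| ≤ Real.sqrt 3 * Real.sqrt (l 0 ^2 + l 1 ^2 + l 2 ^2) := key
      _ = Real.sqrt 3 * enorm3 l := by rw [enorm3]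

lemma dotC_abs_le (a b : Fin 3 → ℂ) :
    ‖dotC a b‖ ≤ ‖a 0‖ * ‖b 0‖ +
      ‖a 1‖ * ‖b 1‖ + ‖a 2‖ * ‖b 2‖ := by
  unfold dotC
  calc ‖a 0 * b 0 + a 1 * b 1 + a 2 * b 2‖
      ≤ ‖a 0 * b 0 + a 1 * b 1‖ + ‖a 2 * b 2‖ :=
        norm_add_le _ _
    _ ≤ ‖a 0 * b 0‖ + ‖a 1 * b 1‖ + ‖a 2 * b 2‖ := by
        have := norm_add_le (a 0 * b 0) (a 1 * b 1); linarith
    _ = _ := by rw [norm_mul, norm_mul, norm_mul]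

lemma dotR_abs_le (a : Fin 3 → ℂ) (k : V3) :
    ‖dotR a k‖ ≤ ‖a 0‖ * |k 0| +
      ‖a 1‖ * |k 1| + ‖a 2‖ * |k 2| := by
  unfold dotR
  calc ‖a 0 * ↑(k 0) + a 1 * ↑(k 1) + a 2 * ↑(k 2)‖
      ≤ ‖a 0 * ↑(k 0) + a 1 * ↑(k 1)‖ + ‖a 2 * ↑(k 2)‖ :=
        norm_add_le _ _
    _ ≤ ‖a 0 * ↑(k 0)‖ + ‖a 1 * ↑(k 1)‖ + ‖a 2 * ↑(k 2)‖ := by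
        have := norm_add_le (a 0 * ↑(k 0)) (a 1 * ↑(k 1)); linarith
    _ = _ := by rw [norm_mul, norm_mul, norm_mul, Complex.norm_real, Real.norm_eq_abs, Complex.norm_real, Real.norm_eq_abs,
          Complex.norm_real, Real.norm_eq_abs]

lemma Xs_abs_le (k : V3) (s : ℝ) (hs : s = 1 ∨ s = -1) :
    ‖Xs k s 0‖ ≤ 1 ∧ ‖Xs k s 1‖ ≤ 1 ∧ ‖Xs k s 2‖ ≤ 1 := by
  have hsq2 : (1:ℝ) ≤ Real.sqrt 2 := by
    nlinarith [Real.sq_sqrt (show (0:ℝ) ≤ 2 by norm_num), Real.sqrt_nonneg 2]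
  by_cases hk : horiz k = 0
  · rw [Xs, if_pos hk]
    refine ⟨?_, ?_, ?_⟩
    · simp only [Matrix.cons_val_zero, Complex.norm_real, Real.norm_eq_abs, abs_inv,
        abs_of_nonneg (Real.sqrt_nonneg 2)]
      exact inv_le_one_of_one_le₀ hsq2
    · simp only [Matrix.cons_val_one, Matrix.head_cons, norm_mul]
      rcases hs with rfl | rfl <;>
        simp [abs_of_nonneg (Real.sqrt_nonneg 2), inv_le_one_of_one_le₀ hsq2]
    · simp
  · rw [Xs, if_neg hk]
    have hnk := enorm_pos_of_horiz hk
    have hnk' := enorm_horiz_pos hk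
    have hd : Real.sqrt 2 * enorm3 (horiz k) * enorm3 k ≠ 0 := by positivity
    have hd2 : (Real.sqrt 2 * enorm3 (horiz k) * enorm3 k) ^ 2 =
        2 * ((k 0 ^ 2 + k 1 ^ 2) * (k 0 ^ 2 + k 1 ^ 2 + k 2 ^ 2)) := by
      rw [mul_pow, mul_pow, Real.sq_sqrt (show (0:ℝ) ≤ 2 by norm_num),
        sq_enorm_horiz, sq_enorm]; ring
    have he := sq_enorm k
    have heh := sq_enorm_horiz k
    refine ⟨?_, ?_, ?_⟩
    · have heq : ((((-(k 1) * k 2 : ℝ) : ℂ) + Complex.I * s * k 0 * enorm3 k) /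
          ((Real.sqrt 2 * enorm3 (horiz k) * enorm3 k : ℝ) : ℂ)) =
          ((↑(-(k 1) * k 2) + Complex.I * ↑(s * k 0 * enorm3 k)) /
          ↑(Real.sqrt 2 * enorm3 (horiz k) * enorm3 k)) := by push_cast; ring
      rw [Matrix.cons_val_zero, heq]
      refine cabs_mix_div_le _ _ _ _ hd zero_le_one ?_
      have hy : (s * k 0 * enorm3 k) ^ 2 = k 0 ^ 2 * enorm3 k ^ 2 := by
        rcases hs with rfl | rfl <;> ring
      rw [hy, one_pow, one_mul, hd2, he]
      nlinarith [sq_nonneg (k 1 * k 1), sq_nonneg (k 0 * k 1), sq_nonneg (k 1 * k 2)]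
    · have heq : ((((k 0 * k 2 : ℝ) : ℂ) + Complex.I * s * k 1 * enorm3 k) /
          ((Real.sqrt 2 * enorm3 (horiz k) * enorm3 k : ℝ) : ℂ)) =
          ((↑(k 0 * k 2) + Complex.I * ↑(s * k 1 * enorm3 k)) /
          ↑(Real.sqrt 2 * enorm3 (horiz k) * enorm3 k)) := by push_cast; ring
      rw [Matrix.cons_val_one, Matrix.cons_val_zero, heq]
      refine cabs_mix_div_le _ _ _ _ hd zero_le_one ?_
      have hy : (s * k 1 * enorm3 k) ^ 2 = k 1 ^ 2 * enorm3 k ^ 2 := by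
        rcases hs with rfl | rfl <;> ring
      rw [hy, one_pow, one_mul, hd2, he]
      nlinarith [sq_nonneg (k 0 * k 0), sq_nonneg (k 0 * k 1), sq_nonneg (k 0 * k 2)]
    · have heq : (((enorm3 (horiz k) ^ 2 : ℝ) : ℂ) /
          ((Real.sqrt 2 * enorm3 (horiz k) * enorm3 k : ℝ) : ℂ)) =
          ((↑(enorm3 (horiz k) ^ 2) + Complex.I * ↑(0:ℝ)) /
          ↑(Real.sqrt 2 * enorm3 (horiz k) * enorm3 k)) := by push_cast; ring
      rw [Matrix.cons_val_two, Matrix.tail_cons, Matrix.head_cons, heq]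
      refine cabs_mix_div_le _ _ _ _ hd zero_le_one ?_
      rw [one_pow, one_mul, hd2]
      nlinarith [heh, sq_nonneg (k 2), sq_nonneg (k 0), sq_nonneg (k 1),
        sq_nonneg (k 0 ^ 2 + k 1 ^ 2)]

lemma VX_abs_bound (j : V3) (r : ℝ) (hr : r = 1 ∨ r = -1) (hj3 : j 2 ≠ 0) :
    ‖VX j r 0‖ ≤ (Real.sqrt 2)⁻¹ ∧
    ‖VX j r 1‖ ≤ (Real.sqrt 2)⁻¹ ∧
    ‖VX j r 2‖ ≤ enorm3 (horiz j) / |j 2| := by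
  have hsq2 : (0:ℝ) < Real.sqrt 2 := by positivity
  have hc : (0:ℝ) ≤ (Real.sqrt 2)⁻¹ := by positivity
  have hc2 : ((Real.sqrt 2)⁻¹) ^ 2 = 2⁻¹ := by
    rw [inv_pow, Real.sq_sqrt (by norm_num : (0:ℝ) ≤ 2)]
  by_cases hjh : horiz j = 0
  · rw [VX, if_pos hjh, Xs, if_pos hjh]
    refine ⟨?_, ?_, ?_⟩
    · simp only [Matrix.cons_val_zero, Complex.norm_real, Real.norm_eq_abs]
      rw [abs_of_nonneg hc]
    · simp only [Matrix.cons_val_one, Matrix.head_cons, norm_mul]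
      rcases hr with rfl | rfl <;>
        simp [abs_of_nonneg hc, abs_of_nonneg hsq2.le]
    · simp only [Matrix.cons_val_two, Matrix.tail_cons, Matrix.head_cons, norm_zero]
      exact div_nonneg (enorm_nonneg' _) (abs_nonneg _)
  · rw [VX, if_neg hjh]
    have hnj := enorm_pos_of_horiz hjh
    have hnj' := enorm_horiz_pos hjh
    have hd : Real.sqrt 2 * enorm3 j * enorm3 (horiz j) ≠ 0 := by positivity
    have hd2 : (Real.sqrt 2 * enorm3 j * enorm3 (horiz j)) ^ 2 =
        2 * (enorm3 j ^ 2 * enorm3 (horiz j) ^ 2) := by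
      rw [mul_pow, mul_pow, Real.sq_sqrt (by norm_num : (0:ℝ) ≤ 2)]; ring
    have he := sq_enorm j
    have heh := sq_enorm_horiz j
    refine ⟨?_, ?_, ?_⟩
    · have heq : ((((-(j 1) * j 2 : ℝ) : ℂ) + Complex.I * r * j 0 * enorm3 j) /
          ((Real.sqrt 2 * enorm3 j * enorm3 (horiz j) : ℝ) : ℂ)) =
          ((↑(-(j 1) * j 2) + Complex.I * ↑(r * j 0 * enorm3 j)) /
          ↑(Real.sqrt 2 * enorm3 j * enorm3 (horiz j))) := by push_cast; ring
      rw [Matrix.cons_val_zero, heq]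
      refine cabs_mix_div_le _ _ _ _ hd hc ?_
      have hy : (r * j 0 * enorm3 j) ^ 2 = j 0 ^ 2 * enorm3 j ^ 2 := by
        rcases hr with rfl | rfl <;> ring
      rw [hy, hc2, hd2, he, heh]
      nlinarith [sq_nonneg (j 1 * j 1), sq_nonneg (j 0 * j 1), sq_nonneg (j 1 * j 2)]
    · have heq : ((((j 0 * j 2 : ℝ) : ℂ) + Complex.I * r * j 1 * enorm3 j) /
          ((Real.sqrt 2 * enorm3 j * enorm3 (horiz j) : ℝ) : ℂ)) =
          ((↑(j 0 * j 2) + Complex.I * ↑(r * j 1 * enorm3 j)) /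
          ↑(Real.sqrt 2 * enorm3 j * enorm3 (horiz j))) := by push_cast; ring
      rw [Matrix.cons_val_one, Matrix.cons_val_zero, heq]
      refine cabs_mix_div_le _ _ _ _ hd hc ?_
      have hy : (r * j 1 * enorm3 j) ^ 2 = j 1 ^ 2 * enorm3 j ^ 2 := by
        rcases hr with rfl | rfl <;> ring
      rw [hy, hc2, hd2, he, heh]
      nlinarith [sq_nonneg (j 0 * j 0), sq_nonneg (j 0 * j 1), sq_nonneg (j 0 * j 2)]
    · have heq : ((-Complex.I * r * ((enorm3 (horiz j) ^ 2 * enorm3 j / j 2 : ℝ) : ℂ)) /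
          ((Real.sqrt 2 * enorm3 j * enorm3 (horiz j) : ℝ) : ℂ)) =
          ((↑(0:ℝ) + Complex.I * ↑(-(r * (enorm3 (horiz j) ^ 2 * enorm3 j / j 2)))) /
          ↑(Real.sqrt 2 * enorm3 j * enorm3 (horiz j))) := by push_cast; ring
      rw [Matrix.cons_val_two, Matrix.tail_cons, Matrix.head_cons, heq]
      refine cabs_mix_div_le _ _ _ _ hd (by positivity) ?_
      have hy : (-(r * (enorm3 (horiz j) ^ 2 * enorm3 j / j 2))) ^ 2 =
          (enorm3 (horiz j) ^ 2 * enorm3 j) ^ 2 / j 2 ^ 2 := by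
        rcases hr with rfl | rfl <;> ring
      rw [hy, hd2, div_pow, sq_abs]
      have hj22 : (0:ℝ) < j 2 ^ 2 := by positivity
      rw [div_mul_eq_mul_div, show ((0:ℝ))^2 = 0 by norm_num, zero_add,
        div_le_div_iff₀ hj22 hj22]
      nlinarith [sq_nonneg (enorm3 (horiz j) ^ 2 * enorm3 j * j 2), hj22,
        mul_pos hnj hnj']

lemma dotR_VX_bound (j k : V3) (r : ℝ) (hr : r = 1 ∨ r = -1) (hj3 : j 2 ≠ 0) :
    ‖dotR (VX j r) k‖ ≤
      enorm3 (horiz k) + enorm3 (horiz j) * |k 2| / |j 2| := by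
  obtain ⟨h0, h1, h2⟩ := VX_abs_bound j r hr hj3
  have hsum := dotR_abs_le (VX j r) k
  have hj2 : (0:ℝ) < |j 2| := abs_pos.mpr hj3
  have hsq2 : (0:ℝ) < Real.sqrt 2 := by positivity
  have key : (Real.sqrt 2)⁻¹ * |k 0| + (Real.sqrt 2)⁻¹ * |k 1| ≤ enorm3 (horiz k) := by
    rw [enorm_horiz, ← mul_add, inv_mul_le_iff₀ hsq2,
      ← Real.sqrt_mul (by norm_num : (0:ℝ) ≤ 2)]
    refine Real.le_sqrt (by positivity) (by positivity) |>.mpr ?_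
    nlinarith [sq_nonneg (|k 0| - |k 1|), sq_abs (k 0), sq_abs (k 1)]
  have t0 : ‖VX j r 0‖ * |k 0| ≤ (Real.sqrt 2)⁻¹ * |k 0| :=
    mul_le_mul_of_nonneg_right h0 (abs_nonneg _)
  have t1 : ‖VX j r 1‖ * |k 1| ≤ (Real.sqrt 2)⁻¹ * |k 1| :=
    mul_le_mul_of_nonneg_right h1 (abs_nonneg _)
  have t2 : ‖VX j r 2‖ * |k 2| ≤ enorm3 (horiz j) / |j 2| * |k 2| :=
    mul_le_mul_of_nonneg_right h2 (abs_nonneg _)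
  have eqn : enorm3 (horiz j) / |j 2| * |k 2| = enorm3 (horiz j) * |k 2| / |j 2| := by
    ring
  linarith [hsum, t0, t1, t2, key, eqn.le, eqn.ge]


/-- the uniform bound (2.40) on B_{jkl}^{rs0}. -/
theorem Brs0_bound
    (L₁ L₂ L₃ : ℝ) (hL₁ : 0 < L₁) (hL₂ : 0 < L₂) (hL₃ : 0 < L₃)
    (j k l : V3) (hj : j ∈ ZL L₁ L₂ L₃) (hk : k ∈ ZL L₁ L₂ L₃) (hl : l ∈ ZL L₁ L₂ L₃)
    (hj3 : j 2 ≠ 0) (hk3 : k 2 ≠ 0)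
    (r s : ℝ) (hr : r = 1 ∨ r = -1) (hs : s = 1 ∨ s = -1) :
    ‖Brs0 (L₁ * L₂ * L₃) j k l r s‖ ≤
      Real.sqrt 5 * (L₁ * L₂ * L₃) * (enorm3 (horiz k) + enorm3 (horiz j) * |k 2| / |j 2|) := by
  have hM : (0:ℝ) < L₁ * L₂ * L₃ := by positivity
  have hP : (0:ℝ) ≤ enorm3 (horiz k) + enorm3 (horiz j) * |k 2| / |j 2| :=
    add_nonneg (enorm_nonneg' _)
      (div_nonneg (mul_nonneg (enorm_nonneg' _) (abs_nonneg _)) (abs_nonneg _))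
  unfold Brs0
  split_ifs with h
  · rw [norm_mul, norm_mul, norm_mul, Complex.norm_I, Complex.norm_real, Real.norm_eq_abs, one_mul,
      abs_of_pos hM]
    have h1 := dotR_VX_bound j k r hr hj3
    have h2 : ‖dotC (Xs k s) (X0 l)‖ ≤ Real.sqrt 3 := by
      obtain ⟨g0, g1, g2⟩ := Xs_abs_le k s hs
      have hsum := dotC_abs_le (Xs k s) (X0 l)
      have hX0 := X0_abs_sum_le l
      have u0 : ‖Xs k s 0‖ * ‖X0 l 0‖ ≤ ‖X0 l 0‖ := by
        nlinarith [norm_nonneg (X0 l 0)]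
      have u1 : ‖Xs k s 1‖ * ‖X0 l 1‖ ≤ ‖X0 l 1‖ := by
        nlinarith [norm_nonneg (X0 l 1)]
      have u2 : ‖Xs k s 2‖ * ‖X0 l 2‖ ≤ ‖X0 l 2‖ := by
        nlinarith [norm_nonneg (X0 l 2)]
      linarith
    have h35 : Real.sqrt 3 ≤ Real.sqrt 5 := Real.sqrt_le_sqrt (by norm_num)
    have hd2n := norm_nonneg (dotC (Xs k s) (X0 l))
    have step : ‖dotR (VX j r) k‖ * ‖dotC (Xs k s) (X0 l)‖ ≤
        (enorm3 (horiz k) + enorm3 (horiz j) * |k 2| / |j 2|) * Real.sqrt 3 :=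
      mul_le_mul h1 h2 hd2n hP
    calc L₁ * L₂ * L₃ * ‖dotR (VX j r) k‖ * ‖dotC (Xs k s) (X0 l)‖
        = (L₁ * L₂ * L₃) *
          (‖dotR (VX j r) k‖ * ‖dotC (Xs k s) (X0 l)‖) := by ring
      _ ≤ (L₁ * L₂ * L₃) *
          ((enorm3 (horiz k) + enorm3 (horiz j) * |k 2| / |j 2|) * Real.sqrt 3) :=
          mul_le_mul_of_nonneg_left step hM.le
      _ ≤ Real.sqrt 5 * (L₁ * L₂ * L₃) *
          (enorm3 (horiz k) + enorm3 (horiz j) * |k 2| / |j 2|) := by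
          nlinarith [mul_le_mul_of_nonneg_left h35 (mul_nonneg hM.le hP)]
  · rw [norm_zero]
    exact mul_nonneg (mul_nonneg (Real.sqrt_nonneg 5) hM.le) hP
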